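/- arXiv:1303.1691 — 4 statements merged into one kernel-verified Lean document; each statement's English description precedes it below -/
import Mathlib

section
/- When two players in a weighted voting game merge into a single player whose weight is the sum of their weights, the probabilistic Banzhaf index of the merged player in the new game equals the sum of the probabilistic Banzhaf indices of the two original players in the original game. -/
open Finset

/-- The value (1 or 0) of coalition `C` in the weighted voting game with
weights `w` and quota `q`: `C` wins iff its total weight is at least `q`. -/
def wvgVal {ι : Type*} [DecidableEq ι] (w : ι → ℕ) (q : ℕ) (C : Finset ι) : ℚ :=
  if q ≤ ∑ j ∈ C, w j then 1 else 0

/-- Probabilistic Banzhaf index of player `i` in the weighted voting game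
with weights `w` and quota `q`. -/
def banzhaf {ι : Type*} [Fintype ι] [DecidableEq ι] (w : ι → ℕ) (q : ℕ) (i : ι) : ℚ :=
  (1 / 2 ^ (Fintype.card ι - 1)) *
    ∑ C ∈ (Finset.univ.erase i).powerset, (wvgVal w q (insert i C) - wvgVal w q C)

lemma sum_powerset_map' {α β M : Type*} [DecidableEq α] [DecidableEq β] [AddCommMonoid M]
    (f : α ↪ β) (s : Finset α) (g : Finset β → M) :
    ∑ C ∈ (s.map f).powerset, g C = ∑ D ∈ s.powerset, g (D.map f) := by
  have hpre : ∀ C ∈ (s.map f).powerset, ((C.preimage f f.injective.injOn).map f) = C := by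
    intro C hC
    ext b
    simp only [mem_map, mem_preimage]
    constructor
    · rintro ⟨a, ha, rfl⟩; exact ha
    · intro hb
      rcases mem_map.1 (mem_powerset.1 hC hb) with ⟨a, _, rfl⟩
      exact ⟨a, hb, rfl⟩
  refine Finset.sum_nbij' (fun C => C.preimage f f.injective.injOn)
    (fun D => D.map f) ?_ ?_ ?_ ?_ ?_
  · intro C hC
    simp only [mem_powerset] at hC ⊢
    intro a ha
    simp only [mem_preimage] at ha
    rcases mem_map.1 (hC ha) with ⟨b, hb, hfb⟩
    rwa [← f.injective hfb]
  · intro D hD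
    simp only [mem_powerset] at hD ⊢
    exact map_subset_map.2 hD
  · intro C hC
    exact hpre C hC
  · intro D hD
    ext a
    simp [mem_preimage, mem_map, f.injective.eq_iff]
  · intro C hC
    rw [hpre C hC]

theorem banzhaf_merge_two (n : ℕ) (w : Fin n → ℕ) (q : ℕ)
    (hq : 0 < q) (hq' : q ≤ ∑ j, w j) (i j : Fin n) (hij : i ≠ j) :
    banzhaf
        (fun o : Option {k : Fin n // k ≠ i ∧ k ≠ j} =>
          Option.elim o (w i + w j) (fun k => w k.1)) q
        (none : Option {k : Fin n // k ≠ i ∧ k ≠ j}) =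
      banzhaf w q i + banzhaf w q j := by
  classical
  set α := {k : Fin n // k ≠ i ∧ k ≠ j} with hα
  set fS : α ↪ Fin n := Function.Embedding.subtype _ with hfS
  set S : Finset (Fin n) := (univ.erase i).erase j with hSdef
  have hjS : j ∉ S := notMem_erase _ _
  have hiS : i ∉ S := fun h => notMem_erase i univ (mem_of_mem_erase h)
  have hS : S = (univ : Finset α).map fS := by
    ext k
    simp only [hSdef, mem_erase, mem_univ, and_true, mem_map]
    constructor
    · rintro ⟨hkj, hki⟩; exact ⟨⟨k, hki, hkj⟩, trivial, rfl⟩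
    · rintro ⟨a, -, rfl⟩; exact ⟨a.2.2, a.2.1⟩
  have hO : (univ.erase (none : Option α)) = (univ : Finset α).map Function.Embedding.some := by
    ext o
    cases o <;> simp
  -- cards
  have hcard : n = Fintype.card α + 2 := by
    have h1 : (univ : Finset (Fin n)) = insert i (insert j S) := by
      ext k
      simp only [mem_univ, mem_insert, hSdef, mem_erase, true_iff]
      by_cases hki : k = i
      · left; exact hki
      · by_cases hkj : k = j
        · right; left; exact hkj
        · right; right; exact ⟨hkj, hki, trivial⟩
    have h2 : S.card = Fintype.card α := by
      rw [hS, card_map, card_univ]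
    have h3 : (univ : Finset (Fin n)).card = n := by simp
    rw [h1, card_insert_of_notMem, card_insert_of_notMem hjS, h2] at h3
    · omega
    · simp [mem_insert, hij, hiS]
  -- pointwise facts about sums of weights
  have hnone : ∀ D : Finset α, (none : Option α) ∉ D.map Function.Embedding.some := by
    intro D; simp
  have hiD : ∀ D : Finset α, i ∉ D.map fS := by
    intro D h
    rcases mem_map.1 h with ⟨a, _, ha⟩
    exact a.2.1 ha
  have hjD : ∀ D : Finset α, j ∉ D.map fS := by
    intro D h
    rcases mem_map.1 h with ⟨a, _, ha⟩
    exact a.2.2 ha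
  set W : Option α → ℕ := fun o => Option.elim o (w i + w j) (fun k => w k.1) with hW
  have key1 : ∀ D : Finset α,
      wvgVal W q (D.map Function.Embedding.some) = wvgVal w q (D.map fS) := by
    intro D
    unfold wvgVal
    congr 1
    rw [Finset.sum_map, Finset.sum_map]
    rfl
  have key2 : ∀ D : Finset α,
      wvgVal W q (insert none (D.map Function.Embedding.some)) =
        wvgVal w q (insert i (insert j (D.map fS))) := by
    intro D
    have hii : i ∉ insert j (D.map fS) := by
      simp only [mem_insert]
      push_neg
      exact ⟨hij, hiD D⟩
    have hsum : ∑ o ∈ insert none (D.map Function.Embedding.some), W o =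
        ∑ k ∈ insert i (insert j (D.map fS)), w k := by
      rw [Finset.sum_insert (hnone D), Finset.sum_insert hii, Finset.sum_insert (hjD D),
        Finset.sum_map, Finset.sum_map, ← add_assoc]
      rfl
    unfold wvgVal
    rw [hsum]
  -- expand banzhaf
  unfold banzhaf
  rw [hO, sum_powerset_map']
  have herasei : (univ.erase i : Finset (Fin n)) = insert j S := by
    ext k
    simp only [mem_erase, mem_univ, and_true, mem_insert, hSdef, mem_erase]
    constructor
    · intro hki
      by_cases hkj : k = j
      · exact Or.inl hkj
      · exact Or.inr ⟨hkj, hki⟩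
    · rintro (rfl | ⟨hkj, hki⟩)
      · exact fun h => hij h.symm
      · exact hki
  have herasej : (univ.erase j : Finset (Fin n)) = insert i S := by
    ext k
    simp only [mem_erase, mem_univ, and_true, mem_insert, hSdef, mem_erase]
    constructor
    · intro hkj
      by_cases hki : k = i
      · exact Or.inl hki
      · exact Or.inr ⟨hkj, hki⟩
    · rintro (rfl | ⟨hkj, hki⟩)
      · exact hij
      · exact hkj
  rw [herasei, herasej, Finset.sum_powerset_insert hjS, Finset.sum_powerset_insert hiS,
    hS, sum_powerset_map', sum_powerset_map', sum_powerset_map', sum_powerset_map']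
  have hcards : Fintype.card (Option α) - 1 = Fintype.card α := by simp
  have hcardn : Fintype.card (Fin n) - 1 = Fintype.card α + 1 := by
    simp [hcard]
  rw [hcards, hcardn]
  simp only [key1, key2]
  rw [← Finset.sum_add_distrib, ← Finset.sum_add_distrib, ← mul_add, ← Finset.sum_add_distrib]
  have hpt : ∀ D : Finset α,
      (wvgVal w q (insert i (D.map fS)) - wvgVal w q (D.map fS) +
        (wvgVal w q (insert i (insert j (D.map fS))) - wvgVal w q (insert j (D.map fS))) +
       (wvgVal w q (insert j (D.map fS)) - wvgVal w q (D.map fS) +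
        (wvgVal w q (insert j (insert i (D.map fS))) - wvgVal w q (insert i (D.map fS))))) =
      2 * (wvgVal w q (insert i (insert j (D.map fS))) - wvgVal w q (D.map fS)) := by
    intro D
    rw [Finset.insert_comm j i]
    ring
  rw [Finset.sum_congr rfl (fun D _ => hpt D), Finset.mul_sum, Finset.mul_sum]
  apply Finset.sum_congr rfl
  intro D _
  rw [pow_succ]
  ring
end

section
/- Let A = (a_1,...,a_m) and B = (b_1,...,b_n) be sequences of positive integers, let α = Σ a_i, let q_A ≤ α−1 and q_B be positive integers, and form the combined sequence C = (a_1,...,a_m, 2α·b_1,...,2α·b_n). Then the number of subsets of indices of C whose elements sum to q_A equals the number of subsets of {1,...,m} with Σ_{i∈S} a_i = q_A, and the number of subsets of indices of C whose elements sum to 2α·q_B equals the number of subsets of {1,...,n} with Σ_{i∈S} b_i = q_B. -/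
open Finset

/-- The number of subsets of indices of the sequence `c : Fin n → ℕ` whose
corresponding elements sum to `t` (the `#SubsetSum` count). -/
def countSubsetSum (n : ℕ) (c : Fin n → ℕ) (t : ℕ) : ℕ :=
  ((Finset.univ : Finset (Fin n)).powerset.filter (fun S => ∑ i ∈ S, c i = t)).card

theorem compare_subsetsum_R_reduction (m n : ℕ) (a : Fin m → ℕ) (b : Fin n → ℕ)
    (ha : ∀ i, 0 < a i) (hb : ∀ i, 0 < b i) (α : ℕ) (hα : α = ∑ i, a i)
    (qA qB : ℕ) (hqA : 0 < qA) (hqA' : qA ≤ α - 1) (hqB : 0 < qB) :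
    countSubsetSum (m + n) (Fin.append a (fun i => 2 * α * b i)) qA =
        countSubsetSum m a qA ∧
      countSubsetSum (m + n) (Fin.append a (fun i => 2 * α * b i)) (2 * α * qB) =
        countSubsetSum n b qB := by
  have hα1 : 1 ≤ α := by omega
  have hqAα : qA < α := by omega
  set c : Fin (m + n) → ℕ := Fin.append a (fun i => 2 * α * b i) with hc
  set eL : Fin m ↪ Fin (m + n) :=
    ⟨Fin.castAdd n, fun x y h => by simpa [Fin.ext_iff] using h⟩ with heL
  set eR : Fin n ↪ Fin (m + n) := Fin.natAddEmb m with heR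
  have hcL : ∀ i : Fin m, c (eL i) = a i := fun i => Fin.append_left a _ i
  have hcR : ∀ i : Fin n, c (eR i) = 2 * α * b i := fun i => Fin.append_right a _ i
  constructor
  · -- part 1
    rw [countSubsetSum, countSubsetSum]
    symm
    apply Finset.card_bij (fun S _ => S.map eL)
    · intro S hS
      simp only [mem_filter, mem_powerset] at hS ⊢
      refine ⟨fun i _ => Finset.mem_univ i, ?_⟩
      rw [Finset.sum_map, ← hS.2]
      exact Finset.sum_congr rfl fun i _ => hcL i
    · intro S1 h1 S2 h2 h
      exact Finset.map_injective eL h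
    · intro T hT
      simp only [mem_filter, mem_powerset] at hT
      have hsub : T ⊆ Finset.univ.map eL := by
        intro j hj
        have hle : c j ≤ qA := hT.2 ▸ Finset.single_le_sum (fun i _ => Nat.zero_le _) hj
        by_cases h : (j : ℕ) < m
        · exact Finset.mem_map.2 ⟨⟨j, h⟩, Finset.mem_univ _, by simp [heL, Fin.ext_iff]; rfl⟩
        · exfalso
          have hje : j = eR ⟨(j : ℕ) - m, by omega⟩ := by simp [heR, Fin.ext_iff]; omega
          rw [hje, hcR] at hle
          nlinarith [hb ⟨(j : ℕ) - m, by omega⟩]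
      rw [Finset.subset_map_iff] at hsub
      obtain ⟨u, -, rfl⟩ := hsub
      refine ⟨u, ?_, rfl⟩
      simp only [mem_filter, mem_powerset]
      refine ⟨fun i _ => Finset.mem_univ i, ?_⟩
      rw [Finset.sum_map] at hT
      rw [← hT.2]
      exact Finset.sum_congr rfl fun i _ => (hcL i).symm
  · -- part 2
    rw [countSubsetSum, countSubsetSum]
    symm
    apply Finset.card_bij (fun S _ => S.map eR)
    · intro S hS
      simp only [mem_filter, mem_powerset] at hS ⊢
      refine ⟨fun i _ => Finset.mem_univ i, ?_⟩
      rw [Finset.sum_map, ← hS.2, Finset.mul_sum]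
      exact Finset.sum_congr rfl fun i _ => hcR i
    · intro S1 h1 S2 h2 h
      exact Finset.map_injective eR h
    · intro T hT
      simp only [mem_filter, mem_powerset] at hT
      have hsub : T ⊆ Finset.univ.map eR := by
        set L := T.filter (fun j : Fin (m+n) => (j : ℕ) < m) with hL
        set R := T.filter (fun j : Fin (m+n) => ¬ (j : ℕ) < m) with hR
        have hsplit : ∑ j ∈ L, c j + ∑ j ∈ R, c j = 2 * α * qB := by
          rw [Finset.sum_filter_add_sum_filter_not]; exact hT.2
        have hdvdR : 2 * α ∣ ∑ j ∈ R, c j := by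
          apply Finset.dvd_sum
          intro j hj
          simp only [hR, mem_filter] at hj
          have hje : j = eR ⟨(j : ℕ) - m, by omega⟩ := by simp [heR, Fin.ext_iff]; omega
          rw [hje, hcR]
          exact Dvd.intro _ rfl
        have hdvdL : 2 * α ∣ ∑ j ∈ L, c j := by
          have h1 : (∑ j ∈ L, c j) = 2 * α * qB - ∑ j ∈ R, c j := by omega
          rw [h1]
          exact Nat.dvd_sub (Dvd.intro _ rfl) hdvdR
        have hLle : ∑ j ∈ L, c j ≤ α := by
          have heq : ∑ j ∈ L, c j = ∑ j ∈ L.preimage eL eL.injective.injOn, a j := by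
            have hLsub : L ⊆ Finset.univ.map eL := by
              intro j hj
              simp only [hL, mem_filter] at hj
              exact Finset.mem_map.2 ⟨⟨j, hj.2⟩, Finset.mem_univ _, by simp [heL, Fin.ext_iff]; rfl⟩
            rw [Finset.subset_map_iff] at hLsub
            obtain ⟨u, -, hu⟩ := hLsub
            rw [hu, Finset.preimage_map, Finset.sum_map]
            exact Finset.sum_congr rfl fun i _ => hcL i
          rw [heq, hα]
          exact Finset.sum_le_sum_of_subset (Finset.subset_univ _)
        have hL0 : ∑ j ∈ L, c j = 0 := by
          rcases hdvdL with ⟨k, hk⟩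
          rcases k with _ | k
          · omega
          · exfalso; nlinarith
        intro j hj
        by_cases hjm : (j : ℕ) < m
        · exfalso
          have hjL : j ∈ L := by simp [hL, mem_filter, hj, hjm]
          have hc0 : c j = 0 := by
            have := Finset.single_le_sum (f := c) (fun i _ => Nat.zero_le _) hjL
            omega
          have hca : c j = a ⟨j, hjm⟩ := by
            have hje : j = eL ⟨j, hjm⟩ := by simp [heL, Fin.ext_iff]; rfl
            exact (congrArg c hje).trans (hcL _)
          have := ha ⟨j, hjm⟩
          omega
        · exact Finset.mem_map.2 ⟨⟨(j:ℕ) - m, by omega⟩, Finset.mem_univ _,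
            by simp [heR, Fin.ext_iff]; omega⟩
      rw [Finset.subset_map_iff] at hsub
      obtain ⟨u, -, rfl⟩ := hsub
      refine ⟨u, ?_, rfl⟩
      simp only [mem_filter, mem_powerset]
      refine ⟨fun i _ => Finset.mem_univ i, ?_⟩
      have hsum : ∑ j ∈ u.map eR, c j = 2 * α * ∑ i ∈ u, b i := by
        rw [Finset.sum_map]
        rw [Finset.sum_congr rfl fun i _ => hcR i]
        exact (Finset.mul_sum _ _ _).symm
      have h2 := hT.2
      rw [hsum] at h2
      have h2α : 0 < 2 * α := by omega
      exact Nat.eq_of_mul_eq_mul_left h2α h2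
end

section
/- Let A = (a_1,...,a_n) be positive integers with each a_i ≡ 0 (mod 8), let q_1, q_2 be positive integers with q_1, q_2 ≡ 0 (mod 8) and 1 ≤ q_1, q_2 ≤ α−1 where α = Σ a_i. Define B = (a_1,...,a_n, 2α−q_1, 2α+1−q_2, 2α+3+q_1+q_2, 3α) and T = 10α+4. Then the number of subsets of indices of B summing to T/2 − 2 = 5α equals the number of subsets of {1,...,n} with Σ a_i = q_1, and the number of subsets of indices of B summing to T/2 − 1 = 5α+1 equals the number of subsets of {1,...,n} with Σ a_i = q_2. -/
open Finset

/-- Pairs of finsets correspond to finsets of `Fin (n + m)`. -/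
def pairEquivAux (n m : ℕ) : Finset (Fin n) × Finset (Fin m) ≃ Finset (Fin (n + m)) :=
  { toFun := fun p => (p.1.disjSum p.2).map finSumFinEquiv.toEmbedding
    invFun := fun T => ((T.map finSumFinEquiv.symm.toEmbedding).toLeft,
      (T.map finSumFinEquiv.symm.toEmbedding).toRight)
    left_inv := by
      intro p
      simp [Finset.map_map]
    right_inv := by
      intro T
      simp [Finset.toLeft_disjSum_toRight, Finset.map_map] }

theorem count_append_aux (n : ℕ) (a : Fin n → ℕ) (b : Fin 4 → ℕ) (t : ℕ) :
    ((Finset.univ : Finset (Fin (n+4))).powerset.filter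
      (fun S => ∑ i ∈ S, Fin.append a b i = t)).card
    = ∑ V : Finset (Fin 4),
        ((Finset.univ : Finset (Finset (Fin n))).filter
          (fun S => (∑ i ∈ S, a i) + ∑ j ∈ V, b j = t)).card := by
  rw [Finset.powerset_univ]
  simp only [Finset.card_filter]
  rw [← Fintype.sum_prod_type']
  refine (Fintype.sum_equiv ((Equiv.prodComm _ _).trans (pairEquivAux n 4))
    _ _ fun x => ?_).symm
  congr 1
  simp [pairEquivAux, Fin.append_left, Fin.append_right]

theorem count_zero_aux (n : ℕ) (a : Fin n → ℕ) (h8 : ∀ i, 8 ∣ a i) (α : ℕ)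
    (hα : α = ∑ i, a i) (E t : ℕ) (h : ∀ s, 8 ∣ s → s ≤ α → s + E ≠ t) :
    ((Finset.univ : Finset (Finset (Fin n))).filter
      (fun S => (∑ i ∈ S, a i) + E = t)).card = 0 := by
  rw [Finset.card_eq_zero, Finset.filter_eq_empty_iff]
  intro S _
  exact h _ (Finset.dvd_sum fun i _ => h8 i)
    (hα ▸ Finset.sum_le_sum_of_subset (Finset.subset_univ S))

theorem compare_subsetsum_RR_reduction (n : ℕ) (a : Fin n → ℕ)
    (ha : ∀ i, 0 < a i) (h8 : ∀ i, 8 ∣ a i) (α : ℕ) (hα : α = ∑ i, a i)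
    (q1 q2 : ℕ) (hq1d : 8 ∣ q1) (hq2d : 8 ∣ q2)
    (hq1 : 1 ≤ q1) (hq1' : q1 ≤ α - 1) (hq2 : 1 ≤ q2) (hq2' : q2 ≤ α - 1) :
    countSubsetSum (n + 4)
        (Fin.append a ![2 * α - q1, 2 * α + 1 - q2, 2 * α + 3 + q1 + q2, 3 * α])
        (5 * α) = countSubsetSum n a q1 ∧
      countSubsetSum (n + 4)
        (Fin.append a ![2 * α - q1, 2 * α + 1 - q2, 2 * α + 3 + q1 + q2, 3 * α])
        (5 * α + 1) = countSubsetSum n a q2 := by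
  have hα8 : 8 ∣ α := hα ▸ Finset.dvd_sum fun i _ => h8 i
  have hq1α : q1 < α := by omega
  have hq2α : q2 < α := by omega
  have hq18 : 8 ≤ q1 := by omega
  have hq28 : 8 ≤ q2 := by omega
  constructor
  · rw [countSubsetSum, count_append_aux]
    rw [Finset.sum_eq_single_of_mem ({0, 3} : Finset (Fin 4)) (Finset.mem_univ _)]
    · rw [countSubsetSum, Finset.powerset_univ]
      apply congrArg
      apply Finset.filter_congr
      intro S _
      rw [Finset.sum_pair (by decide : (0 : Fin 4) ≠ 3)]
      simp only [Matrix.cons_val_zero, Matrix.cons_val_three, Matrix.head_cons,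
        Matrix.cons_val_one, Matrix.head_fin_const, Matrix.vecHead, Matrix.vecTail,
        Matrix.cons_val_fin_one, Function.comp_apply, Fin.succ_zero_eq_one,
        Matrix.cons_val_two, Matrix.cons_val_succ]
      constructor <;> intro h <;> omega
    · intro V _ hne
      apply count_zero_aux n a h8 α hα
      intro s hs hsle
      fin_cases V <;>
        first
          | exact absurd (by decide) hne
          | (simp [Matrix.vecHead, Matrix.vecTail]; omega)
  · rw [countSubsetSum, count_append_aux]
    rw [Finset.sum_eq_single_of_mem ({1, 3} : Finset (Fin 4)) (Finset.mem_univ _)]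
    · rw [countSubsetSum, Finset.powerset_univ]
      apply congrArg
      apply Finset.filter_congr
      intro S _
      rw [Finset.sum_pair (by decide : (1 : Fin 4) ≠ 3)]
      simp only [Matrix.cons_val_zero, Matrix.cons_val_three, Matrix.head_cons,
        Matrix.cons_val_one, Matrix.head_fin_const, Matrix.vecHead, Matrix.vecTail,
        Matrix.cons_val_fin_one, Function.comp_apply, Fin.succ_zero_eq_one,
        Matrix.cons_val_two, Matrix.cons_val_succ]
      constructor <;> intro h <;> omega
    · intro V _ hne
      apply count_zero_aux n a h8 α hα
      intro s hs hsle
      fin_cases V <;>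
        first
          | exact absurd (by decide) hne
          | (simp [Matrix.vecHead, Matrix.vecTail]; omega)
end

section
/- Let A = (a_1,...,a_n) with n > 4, α = Σ a_i even, and suppose every subset with element-sum in {α/2−1, α/2−2} has cardinality exactly k = (n+2)/3 (with 3 ∣ n+2). Let G = (a_1,...,a_n,1,1; α/2), S = {n+1,n+2}, and G_{&S} = (2, a_1,...,a_n; α/2). Then ShapleyShubik(G_{&S},1) > ShapleyShubik(G,n+1) + ShapleyShubik(G,n+2) if and only if the number of subsets of {1,...,n} with element-sum α/2 − 2 exceeds the number of subsets with element-sum α/2 − 1. -/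
open Finset

/-- Shapley–Shubik index of player `i` in the weighted voting game
with weights `w` and quota `q`. -/
def shapley {ι : Type*} [Fintype ι] [DecidableEq ι] (w : ι → ℕ) (q : ℕ) (i : ι) : ℚ :=
  (1 / (Nat.factorial (Fintype.card ι))) *
    ∑ C ∈ (Finset.univ.erase i).powerset,
      (Nat.factorial C.card : ℚ) * (Nat.factorial (Fintype.card ι - 1 - C.card) : ℚ) *
        (wvgVal w q (insert i C) - wvgVal w q C)

lemma my_powerset_map {α β : Type*} (f : α ↪ β) (s : Finset α) :
    (s.map f).powerset = s.powerset.map ⟨Finset.map f, Finset.map_injective f⟩ := by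
  ext t
  simp only [mem_powerset, Finset.subset_map_iff, mem_map, Function.Embedding.coeFn_mk]
  constructor
  · rintro ⟨u, hu, rfl⟩; exact ⟨u, by simpa using hu, rfl⟩
  · rintro ⟨u, hu, rfl⟩; exact ⟨u, by simpa using hu, rfl⟩


lemma erase_zero_eq (n : ℕ) :
    (Finset.univ : Finset (Fin (n+1))).erase 0 = Finset.univ.map ⟨Fin.succ, Fin.succ_injective n⟩ := by
  ext x
  simp only [mem_erase, mem_univ, and_true, mem_map, Function.Embedding.coeFn_mk, true_and]
  rw [← Fin.exists_succ_eq]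


lemma marginal {ι : Type*} [DecidableEq ι] (w : ι → ℕ) (q : ℕ) {i : ι} {C : Finset ι}
    (hiC : i ∉ C) :
    wvgVal w q (insert i C) - wvgVal w q C =
      if (∑ j ∈ C, w j < q ∧ q ≤ w i + ∑ j ∈ C, w j) then 1 else 0 := by
  simp only [wvgVal, Finset.sum_insert hiC]
  split_ifs <;> norm_num <;> omega


lemma shapley_eq_filter {ι : Type*} [Fintype ι] [DecidableEq ι] (w : ι → ℕ) (q : ℕ) (i : ι) :
    shapley w q i = (1 / (Nat.factorial (Fintype.card ι))) *
      ∑ C ∈ (Finset.univ.erase i).powerset.filter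
          (fun C => ∑ j ∈ C, w j < q ∧ q ≤ w i + ∑ j ∈ C, w j),
        (Nat.factorial C.card : ℚ) * (Nat.factorial (Fintype.card ι - 1 - C.card) : ℚ) := by
  rw [shapley, Finset.sum_filter]
  congr 1
  apply Finset.sum_congr rfl
  intro C hC
  have hiC : i ∉ C := fun h =>
    (Finset.mem_erase.mp ((Finset.mem_powerset.mp hC) h)).1 rfl
  rw [marginal w q hiC, mul_ite, mul_one, mul_zero]


lemma sum_eq_card_mul {β : Type*} {s : Finset (Finset β)} {g : Finset β → ℚ} {c : ℚ}
    (h : ∀ B ∈ s, g B = c) : ∑ B ∈ s, g B = s.card * c := by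
  rw [Finset.sum_congr rfl h, Finset.sum_const, nsmul_eq_mul]


lemma merged_val (n : ℕ) (a : Fin n → ℕ) (q k : ℕ) (hq : 3 ≤ q) (hkn : k ≤ n)
    (hk : ∀ S : Finset (Fin n),
      (∑ i ∈ S, a i = q - 1 ∨ ∑ i ∈ S, a i = q - 2) → S.card = k) :
    shapley (Fin.cons 2 a : Fin (n + 1) → ℕ) q (0 : Fin (n + 1)) =
      (1 / (Nat.factorial (n+1))) *
        (((((Finset.univ : Finset (Fin n)).powerset.filter (fun S => ∑ i ∈ S, a i = q - 1)).card
          + (((Finset.univ : Finset (Fin n)).powerset.filter (fun S => ∑ i ∈ S, a i = q - 2)).card) : ℚ))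
          * (Nat.factorial k * Nat.factorial (n - k))) := by
  rw [shapley_eq_filter]
  rw [show (Fintype.card (Fin (n+1))) = n + 1 from Fintype.card_fin _]
  congr 1
  rw [erase_zero_eq, my_powerset_map, Finset.filter_map, Finset.sum_map]
  simp only [Function.Embedding.coeFn_mk, Function.comp_def]
  have hsum : ∀ B : Finset (Fin n),
      ∑ j ∈ B.map ⟨Fin.succ, Fin.succ_injective n⟩, (Fin.cons 2 a : Fin (n+1) → ℕ) j
        = ∑ i ∈ B, a i := by
    intro B
    rw [Finset.sum_map]
    exact Finset.sum_congr rfl fun i _ => by simp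
  have hcond : ∀ B : Finset (Fin n),
      ((∑ j ∈ B.map ⟨Fin.succ, Fin.succ_injective n⟩, (Fin.cons 2 a : Fin (n+1) → ℕ) j < q ∧
        q ≤ (Fin.cons 2 a : Fin (n+1) → ℕ) 0 +
          ∑ j ∈ B.map ⟨Fin.succ, Fin.succ_injective n⟩, (Fin.cons 2 a : Fin (n+1) → ℕ) j))
      ↔ (∑ i ∈ B, a i = q - 1 ∨ ∑ i ∈ B, a i = q - 2) := by
    intro B
    rw [hsum B, Fin.cons_zero]
    omega
  have hfe := Finset.filter_congr
    (s := (Finset.univ : Finset (Fin n)).powerset)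
    (q := fun B => ∑ i ∈ B, a i = q - 1 ∨ ∑ i ∈ B, a i = q - 2)
    (p := fun B => ∑ j ∈ B.map ⟨Fin.succ, Fin.succ_injective n⟩, (Fin.cons 2 a : Fin (n+1) → ℕ) j < q ∧
        q ≤ (Fin.cons 2 a : Fin (n+1) → ℕ) 0 +
          ∑ j ∈ B.map ⟨Fin.succ, Fin.succ_injective n⟩, (Fin.cons 2 a : Fin (n+1) → ℕ) j)
    (fun B _ => hcond B)
  rw [hfe, Finset.filter_or, Finset.sum_union]
  · have h1 : ∀ B ∈ (Finset.univ : Finset (Fin n)).powerset.filter (fun S => ∑ i ∈ S, a i = q - 1),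
        ((Nat.factorial (B.map ⟨Fin.succ, Fin.succ_injective n⟩).card : ℚ) *
          (Nat.factorial (n + 1 - 1 - (B.map ⟨Fin.succ, Fin.succ_injective n⟩).card) : ℚ))
        = (Nat.factorial k : ℚ) * (Nat.factorial (n - k) : ℚ) := by
      intro B hB
      rw [Finset.mem_filter] at hB
      rw [Finset.card_map, hk B (Or.inl hB.2)]
      congr 2
    have h2 : ∀ B ∈ (Finset.univ : Finset (Fin n)).powerset.filter (fun S => ∑ i ∈ S, a i = q - 2),
        ((Nat.factorial (B.map ⟨Fin.succ, Fin.succ_injective n⟩).card : ℚ) *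
          (Nat.factorial (n + 1 - 1 - (B.map ⟨Fin.succ, Fin.succ_injective n⟩).card) : ℚ))
        = (Nat.factorial k : ℚ) * (Nat.factorial (n - k) : ℚ) := by
      intro B hB
      rw [Finset.mem_filter] at hB
      rw [Finset.card_map, hk B (Or.inr hB.2)]
      congr 2
    rw [sum_eq_card_mul h1, sum_eq_card_mul h2]
    push_cast
    ring
  · rw [Finset.disjoint_filter]
    intro B _ hB1 hB2
    omega


lemma shapley_eq_ite {ι : Type*} [Fintype ι] [DecidableEq ι] (w : ι → ℕ) (q : ℕ) (i : ι) :
    shapley w q i = (1 / (Nat.factorial (Fintype.card ι))) *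
      ∑ C ∈ (Finset.univ.erase i).powerset,
        if (∑ j ∈ C, w j < q ∧ q ≤ w i + ∑ j ∈ C, w j) then
          (Nat.factorial C.card : ℚ) * (Nat.factorial (Fintype.card ι - 1 - C.card) : ℚ)
        else 0 := by
  rw [shapley_eq_filter, Finset.sum_filter]


lemma unmerged_val (n : ℕ) (a : Fin n → ℕ) (q k : ℕ) (hq : 3 ≤ q) (hkn : k ≤ n)
    (hk : ∀ S : Finset (Fin n),
      (∑ i ∈ S, a i = q - 1 ∨ ∑ i ∈ S, a i = q - 2) → S.card = k)
    (i j : Fin (n+2)) (hij : j ≠ i)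
    (emb : Fin n ↪ Fin (n+2))
    (hwi : (Fin.snoc (Fin.snoc a 1) 1 : Fin (n+2) → ℕ) i = 1)
    (hwj : (Fin.snoc (Fin.snoc a 1) 1 : Fin (n+2) → ℕ) j = 1)
    (herase : (Finset.univ : Finset (Fin (n+2))).erase i
        = insert j ((Finset.univ : Finset (Fin n)).map emb))
    (hjm : j ∉ (Finset.univ : Finset (Fin n)).map emb)
    (hwe : ∀ x : Fin n, (Fin.snoc (Fin.snoc a 1) 1 : Fin (n+2) → ℕ) (emb x) = a x) :
    shapley (Fin.snoc (Fin.snoc a 1) 1 : Fin (n + 2) → ℕ) q i =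
      (1 / (Nat.factorial (n+2))) *
        ((((Finset.univ : Finset (Fin n)).powerset.filter (fun S => ∑ i ∈ S, a i = q - 1)).card
            * (Nat.factorial k * Nat.factorial (n + 1 - k))
          + (((Finset.univ : Finset (Fin n)).powerset.filter (fun S => ∑ i ∈ S, a i = q - 2)).card
            * (Nat.factorial (k+1) * Nat.factorial (n - k))) : ℚ)) := by
  set w : Fin (n+2) → ℕ := Fin.snoc (Fin.snoc a 1) 1 with hw
  rw [shapley_eq_ite]
  rw [show (Fintype.card (Fin (n+2))) = n + 2 from Fintype.card_fin _]
  congr 1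
  rw [herase, Finset.sum_powerset_insert hjm, my_powerset_map]
  simp only [Finset.sum_map, Function.Embedding.coeFn_mk]
  have hsum : ∀ B : Finset (Fin n), ∑ x ∈ B.map emb, w x = ∑ x ∈ B, a x := by
    intro B; rw [Finset.sum_map]; exact Finset.sum_congr rfl fun x _ => hwe x
  have hjB : ∀ B : Finset (Fin n), j ∉ B.map emb := by
    intro B hB
    exact hjm (Finset.mem_map.mpr (by
      obtain ⟨x, _, hx⟩ := Finset.mem_map.mp hB
      exact ⟨x, Finset.mem_univ x, hx⟩))
  have hsum' : ∀ B : Finset (Fin n), ∑ x ∈ B, w (emb x) = ∑ x ∈ B, a x := by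
    intro B; exact Finset.sum_congr rfl fun x _ => hwe x
  have e1 : ∑ B ∈ (Finset.univ : Finset (Fin n)).powerset,
      (if (∑ x ∈ B, w (emb x) < q ∧ q ≤ w i + ∑ x ∈ B, w (emb x)) then
        (Nat.factorial (B.map emb).card : ℚ) * (Nat.factorial (n + 2 - 1 - (B.map emb).card) : ℚ)
      else 0)
      = (((Finset.univ : Finset (Fin n)).powerset.filter (fun S => ∑ i ∈ S, a i = q - 1)).card
          * (Nat.factorial k * Nat.factorial (n + 1 - k)) : ℚ) := by
    rw [← Finset.sum_filter]
    have hfe := Finset.filter_congr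
      (s := (Finset.univ : Finset (Fin n)).powerset)
      (p := fun B => ∑ x ∈ B, w (emb x) < q ∧ q ≤ w i + ∑ x ∈ B, w (emb x))
      (q := fun B => ∑ x ∈ B, a x = q - 1)
      (fun B _ => by simp only [hsum', hwi]; omega)
    rw [hfe]
    rw [sum_eq_card_mul (c := (Nat.factorial k : ℚ) * (Nat.factorial (n + 1 - k) : ℚ))
      (fun B hB => by
        rw [Finset.mem_filter] at hB
        rw [Finset.card_map, hk B (Or.inl hB.2)]
        have hx : n + 2 - 1 - k = n + 1 - k := by omega
        rw [hx])]
  have e2 : ∑ B ∈ (Finset.univ : Finset (Fin n)).powerset,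
      (if (∑ x ∈ insert j (B.map emb), w x < q ∧ q ≤ w i + ∑ x ∈ insert j (B.map emb), w x) then
        (Nat.factorial (insert j (B.map emb)).card : ℚ)
          * (Nat.factorial (n + 2 - 1 - (insert j (B.map emb)).card) : ℚ)
      else 0)
      = (((Finset.univ : Finset (Fin n)).powerset.filter (fun S => ∑ i ∈ S, a i = q - 2)).card
          * (Nat.factorial (k+1) * Nat.factorial (n - k)) : ℚ) := by
    rw [← Finset.sum_filter]
    have hsum2 : ∀ B : Finset (Fin n), ∑ x ∈ insert j (B.map emb), w x = 1 + ∑ x ∈ B, a x := by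
      intro B; rw [Finset.sum_insert (hjB B), hwj, hsum B]
    have hfe := Finset.filter_congr
      (s := (Finset.univ : Finset (Fin n)).powerset)
      (p := fun B => ∑ x ∈ insert j (B.map emb), w x < q ∧
        q ≤ w i + ∑ x ∈ insert j (B.map emb), w x)
      (q := fun B => ∑ x ∈ B, a x = q - 2)
      (fun B _ => by simp only [hsum2, hwi]; omega)
    rw [hfe]
    rw [sum_eq_card_mul (c := (Nat.factorial (k+1) : ℚ) * (Nat.factorial (n - k) : ℚ))
      (fun B hB => by
        rw [Finset.mem_filter] at hB
        rw [Finset.card_insert_of_notMem (hjB B), Finset.card_map, hk B (Or.inr hB.2)]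
        have hx : n + 2 - 1 - (k + 1) = n - k := by omega
        rw [hx])]
  rw [e1, e2]


lemma final_arith (n k N1 N2 : ℕ) (h3k : 3 * k = n + 2) (hn : 4 < n) :
    ((1 : ℚ) / (Nat.factorial (n+1))) *
        (((N1 : ℚ) + N2) * (Nat.factorial k * Nat.factorial (n-k))) >
      ((1 : ℚ) / (Nat.factorial (n+2))) *
          ((N1 : ℚ) * (Nat.factorial k * Nat.factorial (n+1-k))
            + (N2 : ℚ) * (Nat.factorial (k+1) * Nat.factorial (n-k)))
        + ((1 : ℚ) / (Nat.factorial (n+2))) *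
          ((N1 : ℚ) * (Nat.factorial k * Nat.factorial (n+1-k))
            + (N2 : ℚ) * (Nat.factorial (k+1) * Nat.factorial (n-k)))
      ↔ N2 > N1 := by
  have hn7 : 7 ≤ n := by omega
  have hk3 : 3 ≤ k := by omega
  have hkn : k ≤ n := by omega
  have hf1 : (0 : ℚ) < ((Nat.factorial (n+1) : ℕ) : ℚ) := by
    exact_mod_cast Nat.factorial_pos (n+1)
  have hf2 : (0 : ℚ) < ((Nat.factorial (n+2) : ℕ) : ℚ) := by
    exact_mod_cast Nat.factorial_pos (n+2)
  set X : ℚ := (N1 : ℚ) * (Nat.factorial k * Nat.factorial (n+1-k))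
            + (N2 : ℚ) * (Nat.factorial (k+1) * Nat.factorial (n-k)) with hX
  set Y : ℚ := ((N1 : ℚ) + N2) * (Nat.factorial k * Nat.factorial (n-k)) with hY
  rw [gt_iff_lt, ← mul_lt_mul_iff_right₀ hf2]
  have eL : ((Nat.factorial (n+2) : ℕ) : ℚ) *
      ((1 : ℚ) / (Nat.factorial (n+2)) * X + (1 : ℚ) / (Nat.factorial (n+2)) * X)
      = 2 * X := by
    field_simp
    ring
  have eR : ((Nat.factorial (n+2) : ℕ) : ℚ) * ((1 : ℚ) / (Nat.factorial (n+1)) * Y)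
      = ((n : ℚ) + 2) * Y := by
    rw [show Nat.factorial (n+2) = (n+2) * Nat.factorial (n+1) from Nat.factorial_succ (n+1)]
    push_cast
    field_simp
  rw [eL, eR]
  have hcast : (2 * X < ((n : ℚ) + 2) * Y) ↔
      (2 * (N1 * (Nat.factorial k * Nat.factorial (n+1-k))
            + N2 * (Nat.factorial (k+1) * Nat.factorial (n-k)))
        < (n + 2) * ((N1 + N2) * (Nat.factorial k * Nat.factorial (n-k)))) := by
    rw [hX, hY]
    push_cast
    constructor <;> intro h <;> exact_mod_cast h
  rw [hcast]
  -- now a pure ℕ inequality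
  rw [show n + 1 - k = (n - k) + 1 from by omega, Nat.factorial_succ ((n : ℕ) - k),
    Nat.factorial_succ k]
  have hx : 0 < Nat.factorial k * Nat.factorial (n-k) := by positivity
  obtain ⟨j, rfl⟩ : ∃ j, k = j + 3 := ⟨k - 3, by omega⟩
  have hL : 2 * (N1 * (Nat.factorial (j+3) * (((n - (j+3)) + 1) * Nat.factorial (n-(j+3))))
            + N2 * (((j+3)+1) * Nat.factorial (j+3) * Nat.factorial (n-(j+3))))
      = (2 * N1 * (2*j + 5) + 2 * N2 * (j+4)) * (Nat.factorial (j+3) * Nat.factorial (n-(j+3))) := by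
    rw [show n - (j+3) + 1 = 2*j + 5 from by omega]
    ring
  have hR : (n + 2) * ((N1 + N2) * (Nat.factorial (j+3) * Nat.factorial (n-(j+3))))
      = (3 * (j+3) * (N1 + N2)) * (Nat.factorial (j+3) * Nat.factorial (n-(j+3))) := by
    rw [← h3k]
    ring
  rw [hL, hR, Nat.mul_lt_mul_right hx]
  constructor <;> intro h <;> nlinarith [h]


theorem shapley_beneficial_merge_iff (n : ℕ) (a : Fin n → ℕ)
    (ha : ∀ i, 0 < a i) (hn : 4 < n) (α : ℕ) (hα : α = ∑ i, a i) (hαeven : Even α)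
    (hdvd : 3 ∣ n + 2)
    (hk : ∀ S : Finset (Fin n),
      (∑ i ∈ S, a i = α / 2 - 1 ∨ ∑ i ∈ S, a i = α / 2 - 2) →
        S.card = (n + 2) / 3) :
    shapley (Fin.cons 2 a : Fin (n + 1) → ℕ) (α / 2) (0 : Fin (n + 1)) >
        shapley (Fin.snoc (Fin.snoc a 1) 1 : Fin (n + 2) → ℕ) (α / 2)
            (⟨n, by omega⟩ : Fin (n + 2)) +
          shapley (Fin.snoc (Fin.snoc a 1) 1 : Fin (n + 2) → ℕ) (α / 2)
            (⟨n + 1, by omega⟩ : Fin (n + 2)) ↔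
      countSubsetSum n a (α / 2 - 2) > countSubsetSum n a (α / 2 - 1) := by
  set q : ℕ := α / 2 with hqdef
  set k : ℕ := (n + 2) / 3 with hkdef
  have h3k : 3 * k = n + 2 := Nat.mul_div_cancel' hdvd
  have hkn : k ≤ n := by omega
  have hq3 : 3 ≤ q := by
    have hge : n ≤ α := by
      rw [hα]
      calc n = ∑ _i : Fin n, 1 := by simp
        _ ≤ ∑ i, a i := Finset.sum_le_sum (fun i _ => ha i)
    obtain ⟨t, ht⟩ := hαeven
    omega
  have i1lt : n < n + 2 := by omega
  have i2lt : n + 1 < n + 2 := by omega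
  set i1 : Fin (n+2) := ⟨n, i1lt⟩ with hi1
  set i2 : Fin (n+2) := ⟨n+1, i2lt⟩ with hi2
  set emb : Fin n ↪ Fin (n+2) :=
    ⟨fun x => ⟨x.1, by omega⟩, fun x y h => by
      apply Fin.ext
      simpa [Fin.ext_iff] using h⟩ with hemb
  have hwe : ∀ x : Fin n, (Fin.snoc (Fin.snoc a 1) 1 : Fin (n+2) → ℕ) (emb x) = a x := by
    intro x
    have hx : emb x = Fin.castSucc (Fin.castSucc x) := rfl
    rw [hx, Fin.snoc_castSucc, Fin.snoc_castSucc]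
  have hwi1 : (Fin.snoc (Fin.snoc a 1) 1 : Fin (n+2) → ℕ) i1 = 1 := by
    have hx : i1 = Fin.castSucc (Fin.last n) := rfl
    rw [hx, Fin.snoc_castSucc, Fin.snoc_last]
  have hwi2 : (Fin.snoc (Fin.snoc a 1) 1 : Fin (n+2) → ℕ) i2 = 1 := by
    have hx : i2 = Fin.last (n+1) := rfl
    rw [hx, Fin.snoc_last]
  have hmem : ∀ x : Fin (n+2), x ∈ (Finset.univ : Finset (Fin n)).map emb ↔ (x : ℕ) < n := by
    intro x
    simp only [Finset.mem_map, Finset.mem_univ, true_and]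
    constructor
    · rintro ⟨y, rfl⟩; exact y.isLt
    · intro h; exact ⟨⟨(x : ℕ), h⟩, by apply Fin.ext; rfl⟩
  have herase1 : (Finset.univ : Finset (Fin (n+2))).erase i1
      = insert i2 ((Finset.univ : Finset (Fin n)).map emb) := by
    ext x
    simp only [Finset.mem_erase, Finset.mem_univ, and_true, Finset.mem_insert, hmem, Ne,
      Fin.ext_iff, hi1, hi2]
    have := x.isLt
    omega
  have herase2 : (Finset.univ : Finset (Fin (n+2))).erase i2
      = insert i1 ((Finset.univ : Finset (Fin n)).map emb) := by
    ext x
    simp only [Finset.mem_erase, Finset.mem_univ, and_true, Finset.mem_insert, hmem, Ne,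
      Fin.ext_iff, hi1, hi2]
    have := x.isLt
    omega
  have hjm1 : i1 ∉ (Finset.univ : Finset (Fin n)).map emb := by
    rw [hmem]; simp [hi1]
  have hjm2 : i2 ∉ (Finset.univ : Finset (Fin n)).map emb := by
    rw [hmem]; simp [hi2]
  have hne12 : i2 ≠ i1 := by simp [hi1, hi2, Fin.ext_iff]
  have hne21 : i1 ≠ i2 := by simp [hi1, hi2, Fin.ext_iff]
  rw [merged_val n a q k hq3 hkn hk,
    unmerged_val n a q k hq3 hkn hk i1 i2 hne12 emb hwi1 hwi2 herase1 hjm2 hwe,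
    unmerged_val n a q k hq3 hkn hk i2 i1 hne21 emb hwi2 hwi1 herase2 hjm1 hwe]
  exact final_arith n k
    (((Finset.univ : Finset (Fin n)).powerset.filter (fun S => ∑ i ∈ S, a i = q - 1)).card)
    (((Finset.univ : Finset (Fin n)).powerset.filter (fun S => ∑ i ∈ S, a i = q - 2)).card)
    h3k hn
end
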